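/- Assume s < t and s(s−t)/(r(r−t)) > 1, and set d = (1/(r−s))·ln( s(s−t)/(r(r−t)) ), so that d > 0. Define V(x) = [(r+α)·e^{rx} − (s+α)·e^{sx}] / [r(r+α)·e^{rd} − s(s+α)·e^{sd}] for 0 ≤ x < d and V(x) = u₀/δ + (1/t)·e^{t(x−d)} for x ≥ d. Then V is continuously differentiable on (0,∞) and satisfies the Hamilton–Jacobi–Bellman equation of the restricted dividend problem: for every x > 0, the supremum over u ∈ [0, u₀] of (c − u)·V'(x) − (λ+δ)·V(x) + λ·∫₀ˣ V(x−y)·α·e^{−αy} dy + u equals 0. -/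

import Mathlib

private lemma expDeriv (k x : ℝ) : HasDerivAt (fun y => Real.exp (k*y)) (k * Real.exp (k*x)) x := by
  simpa [mul_comm] using (((hasDerivAt_id x).const_mul k).exp)

private lemma contExpMul (k : ℝ) : Continuous fun y : ℝ => Real.exp (k*y) :=
  Real.continuous_exp.comp (continuous_const.mul continuous_id)

private lemma expInt (k p q : ℝ) (hk : k ≠ 0) :
    ∫ z in p..q, Real.exp (k*z) = (Real.exp (k*q) - Real.exp (k*p))/k := by
  have h : ∀ z ∈ Set.uIcc p q, HasDerivAt (fun y => Real.exp (k*y)/k) (Real.exp (k*z)) z := by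
    intro z _
    have := (expDeriv k z).div_const k
    simpa [mul_div_cancel_left₀ _ hk] using this
  rw [intervalIntegral.integral_eq_sub_of_hasDerivAt h ((contExpMul k).intervalIntegrable p q)]
  ring

private lemma expInt2 (C1 C2 k1 k2 p q : ℝ) (h1 : k1 ≠ 0) (h2 : k2 ≠ 0) :
    ∫ z in p..q, (C1 * Real.exp (k1*z) + C2 * Real.exp (k2*z)) =
      C1 * ((Real.exp (k1*q) - Real.exp (k1*p))/k1)
      + C2 * ((Real.exp (k2*q) - Real.exp (k2*p))/k2) := by
  rw [intervalIntegral.integral_add (f := fun z => C1 * Real.exp (k1*z)) (g := fun z => C2 * Real.exp (k2*z)) ((continuous_const.mul (contExpMul k1)).intervalIntegrable p q)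
      ((continuous_const.mul (contExpMul k2)).intervalIntegrable p q),
    intervalIntegral.integral_const_mul, intervalIntegral.integral_const_mul,
    expInt k1 p q h1, expInt k2 p q h2]

set_option maxHeartbeats 1000000 in
/-- Assume s < t and s(s−t)/(r(r−t)) > 1, and set
d = (1/(r−s))·ln(s(s−t)/(r(r−t))) > 0. Define
V(x) = [(r+α)e^{rx} − (s+α)e^{sx}]/[r(r+α)e^{rd} − s(s+α)e^{sd}] for 0 ≤ x < d and
V(x) = u₀/δ + (1/t)e^{t(x−d)} for x ≥ d. Then V is continuously differentiable on
(0,∞) and satisfies the HJB equation of the restricted dividend problem: for every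
x > 0, sup_{u ∈ [0,u₀]} { (c−u)V'(x) − (λ+δ)V(x) + λ∫₀ˣ V(x−y)αe^{−αy}dy + u } = 0. -/
theorem stmt_19 (c lam del al u0 r s t d : ℝ) (V : ℝ → ℝ)
    (hc : 0 < c) (hlam : 0 < lam) (hdel : 0 < del) (hal : 0 < al)
    (hu0 : 0 < u0) (hu0c : u0 < c)
    (hr : c * r ^ 2 - (lam + del - al * c) * r - al * del = 0)
    (hs : c * s ^ 2 - (lam + del - al * c) * s - al * del = 0)
    (hs1 : -al < s) (hs2 : s < 0) (hr1 : 0 < r)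
    (ht0 : t < 0)
    (htr : (c - u0) * t ^ 2 - (lam + del - al * (c - u0)) * t - al * del = 0)
    (hst : s < t)
    (hratio : s * (s - t) / (r * (r - t)) > 1)
    (hd : d = (1 / (r - s)) * Real.log (s * (s - t) / (r * (r - t))))
    (hV : ∀ x, V x =
      if x < d then
        ((r + al) * Real.exp (r * x) - (s + al) * Real.exp (s * x))
          / (r * (r + al) * Real.exp (r * d) - s * (s + al) * Real.exp (s * d))
      else
        u0 / del + (1 / t) * Real.exp (t * (x - d))) :
    0 < d ∧
    (∀ x > (0:ℝ), DifferentiableAt ℝ V x) ∧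
    ContinuousOn (deriv V) (Set.Ioi 0) ∧
    ∀ x > (0:ℝ),
      sSup ((fun u => (c - u) * deriv V x - (lam + del) * V x
          + lam * (∫ y in (0:ℝ)..x, V (x - y) * (al * Real.exp (-al * y))) + u) ''
        Set.Icc (0:ℝ) u0) = 0 := by
  have hrs0 : (0:ℝ) < r - s := by linarith
  have hrt : (0:ℝ) < r - t := by linarith
  have hta : (0:ℝ) < t + al := by linarith
  have htne : t ≠ 0 := ne_of_lt ht0
  have hra : (0:ℝ) < r + al := by linarith
  have hsa : (0:ℝ) < s + al := by linarith
  have hratio0 : (0:ℝ) < s * (s - t) / (r * (r - t)) := by linarith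
  have hd0 : 0 < d := by
    rw [hd]
    exact mul_pos (by positivity) (Real.log_pos hratio)
  set K := r * (r + al) * Real.exp (r * d) - s * (s + al) * Real.exp (s * d) with hKdef
  have hErp := Real.exp_pos (r*d)
  have hEsp := Real.exp_pos (s*d)
  have hK : 0 < K := by
    have h1 : 0 < r*(r+al) := by positivity
    have h2 : s*(s+al) < 0 := mul_neg_of_neg_of_pos hs2 hsa
    nlinarith
  have hKne : K ≠ 0 := ne_of_gt hK
  clear_value K
  -- Eq1
  have hEq1 : r*(r-t)*Real.exp (r*d) = s*(s-t)*Real.exp (s*d) := by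
    have h1 : (r-s)*d = Real.log (s * (s - t) / (r * (r - t))) := by
      rw [hd]; field_simp
    have h2 : Real.exp ((r-s)*d) = s * (s - t) / (r * (r - t)) := by
      rw [h1, Real.exp_log hratio0]
    rw [show (r-s)*d = r*d - s*d by ring, Real.exp_sub] at h2
    have hrrt : r*(r-t) ≠ 0 := by positivity
    field_simp at h2
    rw [mul_comm d s] at h2
    linarith [h2]
  -- Eq2 (polynomial form with (t+al) factor)
  have hEq2t : del*t*(t+al)*((r+al)*Real.exp (r*d) - (s+al)*Real.exp (s*d))
      = (u0*t+del)*(t+al)*K := by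
    rw [hKdef]
    linear_combination (-(t*(t+al)*Real.exp (r*d)))*hr + (t*(t+al)*Real.exp (s*d))*hs
      + (r * (r + al) * Real.exp (r * d) - s * (s + al) * Real.exp (s * d))*htr
      + (t*lam)*hEq1
  have hEq2 : del*t*((r+al)*Real.exp (r*d) - (s+al)*Real.exp (s*d)) = (u0*t+del)*K := by
    have h3 : (del*t*((r+al)*Real.exp (r*d) - (s+al)*Real.exp (s*d)) - (u0*t+del)*K)*(t+al) = 0 := by
      linear_combination hEq2t
    rcases mul_eq_zero.mp h3 with h|h
    · linarith
    · linarith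
  -- Eq6
  have hEq6 : (t+al)*(r*Real.exp (r*d) - s*Real.exp (s*d)) = K := by
    rw [hKdef]; linear_combination -hEq1
  -- value matching
  have hVd : V d = ((r+al)*Real.exp (r*d) - (s+al)*Real.exp (s*d))/K := by
    rw [hV d, if_neg (lt_irrefl d), sub_self, mul_zero, Real.exp_zero, mul_one]
    rw [eq_div_iff hKne]
    have hdt : del * t < 0 := mul_neg_of_pos_of_neg hdel ht0
    field_simp
    rw [mul_comm d s]
    linear_combination -hEq2
  have hVg1 : ∀ x, x ≤ d → V x = ((r+al)*Real.exp (r*x) - (s+al)*Real.exp (s*x))/K := by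
    intro x hx
    rcases lt_or_eq_of_le hx with h|h
    · rw [hV x, if_pos h]
    · subst h; exact hVd
  have hVg2 : ∀ x, d ≤ x → V x = u0/del + (1/t)*Real.exp (t*(x-d)) := by
    intro x hx
    rw [hV x, if_neg (not_lt.mpr hx)]
  -- derivatives of the two pieces
  have hg1deriv : ∀ y : ℝ, HasDerivAt (fun z => ((r+al)*Real.exp (r*z) - (s+al)*Real.exp (s*z))/K)
      ((r*(r+al)*Real.exp (r*y) - s*(s+al)*Real.exp (s*y))/K) y := by
    intro y
    have h := (((expDeriv r y).const_mul (r+al)).sub ((expDeriv s y).const_mul (s+al))).div_const K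
    refine h.congr_deriv ?_
    ring
  have hg2deriv : ∀ y : ℝ, HasDerivAt (fun z => u0/del + (1/t)*Real.exp (t*(z-d)))
      (Real.exp (t*(y-d))) y := by
    intro y
    have h1 : HasDerivAt (fun z : ℝ => t*(z-d)) t y := by
      simpa using ((hasDerivAt_id y).sub_const d).const_mul t
    have h2 := (h1.exp.const_mul (1/t)).const_add (u0/del)
    refine h2.congr_deriv ?_
    field_simp
  -- derivative of V
  have hVderiv : ∀ x : ℝ, HasDerivAt V
      (if x < d then (r*(r+al)*Real.exp (r*x) - s*(s+al)*Real.exp (s*x))/K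
       else Real.exp (t*(x-d))) x := by
    intro x
    rcases lt_trichotomy x d with hx|hx|hx
    · rw [if_pos hx]
      apply (hg1deriv x).congr_of_eventuallyEq
      filter_upwards [Iio_mem_nhds hx] with y hy
      rw [hV y, if_pos (Set.mem_Iio.mp hy)]
    · subst hx
      rw [if_neg (lt_irrefl x)]
      have h1 : HasDerivWithinAt V 1 (Set.Iic x) x := by
        have h0 := ((hg1deriv x).hasDerivWithinAt (s := Set.Iic x)).congr
          (fun y hy => hVg1 y hy) (hVg1 x le_rfl)
        rwa [show (r*(r+al)*Real.exp (r*x) - s*(s+al)*Real.exp (s*x))/K = 1 by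
          rw [← hKdef]; exact div_self hKne] at h0
      have h2 : HasDerivWithinAt V 1 (Set.Ici x) x := by
        have h0 := ((hg2deriv x).hasDerivWithinAt (s := Set.Ici x)).congr
          (fun y hy => hVg2 y hy) (hVg2 x le_rfl)
        rwa [sub_self, mul_zero, Real.exp_zero] at h0
      have h3 := h1.union h2
      rw [Set.Iic_union_Ici] at h3
      rw [sub_self, mul_zero, Real.exp_zero]
      rw [hasDerivWithinAt_univ] at h3
      exact h3
    · rw [if_neg (not_lt.mpr hx.le)]
      apply (hg2deriv x).congr_of_eventuallyEq
      filter_upwards [Ioi_mem_nhds hx] with y hy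
      rw [hV y, if_neg (not_lt.mpr (Set.mem_Ioi.mp hy).le)]
  have hVdiff : ∀ x : ℝ, DifferentiableAt ℝ V x := fun x => (hVderiv x).differentiableAt
  have hVcont : Continuous V := by
    have : Differentiable ℝ V := hVdiff
    exact this.continuous
  have hderivV : deriv V = fun x =>
      (if x < d then (r*(r+al)*Real.exp (r*x) - s*(s+al)*Real.exp (s*x))/K
       else Real.exp (t*(x-d))) := funext fun x => (hVderiv x).deriv
  -- continuity of deriv V
  have hWcont : Continuous (fun x =>
      (if x < d then (r*(r+al)*Real.exp (r*x) - s*(s+al)*Real.exp (s*x))/K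
       else Real.exp (t*(x-d)))) := by
    have hmatch : ∀ x : ℝ, x = d →
        (r*(r+al)*Real.exp (r*x) - s*(s+al)*Real.exp (s*x))/K = Real.exp (t*(x-d)) := by
      intro x hx; subst hx
      rw [← hKdef, div_self hKne, sub_self, mul_zero, Real.exp_zero]
    have heq : (fun x => (if x < d then (r*(r+al)*Real.exp (r*x) - s*(s+al)*Real.exp (s*x))/K
        else Real.exp (t*(x-d))))
        = fun x => (if x ≤ d then (r*(r+al)*Real.exp (r*x) - s*(s+al)*Real.exp (s*x))/K
        else Real.exp (t*(x-d))) := by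
      funext x
      rcases lt_trichotomy x d with h|h|h
      · rw [if_pos h, if_pos h.le]
      · rw [if_neg (by simp [h]), if_pos h.le, hmatch x h]
      · rw [if_neg (not_lt.mpr h.le), if_neg (not_le.mpr h)]
    rw [heq]
    apply Continuous.if_le
    · exact ((continuous_const.mul (contExpMul r)).sub (continuous_const.mul (contExpMul s))).div_const _
    · exact (contExpMul t).comp (continuous_id.sub continuous_const)
    · exact continuous_id
    · exact continuous_const
    · exact hmatch
  -- Vieta
  have hsum : c*(r+s) = lam + del - al*c := by
    have h1 : (r-s)*(c*(r+s) - (lam+del-al*c)) = 0 := by linear_combination hr - hs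
    rcases mul_eq_zero.mp h1 with h|h
    · linarith
    · linarith
  have hprod : c*(r*s) = -(al*del) := by linear_combination r*hsum - hr
  have hQpos : 0 < r*s - t*(r+s+al) := by
    have h1 : (lam+del)*t + al*del = (c-u0)*(t*(t+al)) := by linear_combination -htr
    have h2 : (c-u0)*(t*(t+al)) < 0 :=
      mul_neg_of_pos_of_neg (by linarith) (mul_neg_of_neg_of_pos ht0 hta)
    have h3 : c*(r*s - t*(r+s+al)) = -((lam+del)*t + al*del) := by
      linear_combination hprod - t*hsum
    have h4 : 0 < c * (r*s - t*(r+s+al)) := by rw [h3]; linarith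
    exact (mul_pos_iff_of_pos_left hc).mp h4
  have hend : r^2*(r+al)*Real.exp (r*d) < s^2*(s+al)*Real.exp (s*d) := by
    have h3 : (r-t)*(r^2*(r+al)*Real.exp (r*d) - s^2*(s+al)*Real.exp (s*d))
        = s*Real.exp (s*d)*(r-s)*(r*s - t*(r+s+al)) := by
      linear_combination (r*(r+al))*hEq1
    have h4 : s*Real.exp (s*d) < 0 := mul_neg_of_neg_of_pos hs2 hEsp
    have h5 : s*Real.exp (s*d)*(r-s) < 0 := mul_neg_of_neg_of_pos h4 hrs0
    have h6 : s*Real.exp (s*d)*(r-s)*(r*s-t*(r+s+al)) < 0 := mul_neg_of_neg_of_pos h5 hQpos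
    have h7 : (r-t)*(r^2*(r+al)*Real.exp (r*d) - s^2*(s+al)*Real.exp (s*d)) < 0 := by
      rw [h3]; exact h6
    have h8 : 0 < (r-t)*(s^2*(s+al)*Real.exp (s*d) - r^2*(r+al)*Real.exp (r*d)) := by
      linarith [h7, sq_nonneg (r-t)]
    have h9 := (mul_pos_iff_of_pos_left hrt).mp h8
    linarith
  have hanti : StrictAntiOn (fun y => r*(r+al)*Real.exp (r*y) - s*(s+al)*Real.exp (s*y))
      (Set.Icc 0 d) := by
    apply strictAntiOn_of_deriv_neg (convex_Icc 0 d)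
    · exact ((continuous_const.mul (contExpMul r)).sub
        (continuous_const.mul (contExpMul s))).continuousOn
    · intro y hy
      rw [interior_Icc] at hy
      rw [(show HasDerivAt (fun y => r*(r+al)*Real.exp (r*y) - s*(s+al)*Real.exp (s*y)) _ y from (((expDeriv r y).const_mul (r*(r+al))).sub
        ((expDeriv s y).const_mul (s*(s+al))))).deriv]
      have hry : Real.exp (r*y) = Real.exp ((r-s)*y) * Real.exp (s*y) := by
        rw [← Real.exp_add]; congr 1; ring
      have hrd2 : Real.exp (r*d) = Real.exp ((r-s)*d) * Real.exp (s*d) := by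
        rw [← Real.exp_add]; congr 1; ring
      have hlt : Real.exp ((r-s)*y) < Real.exp ((r-s)*d) :=
        Real.exp_lt_exp.mpr (mul_lt_mul_of_pos_left hy.2 hrs0)
      have h8 : r^2*(r+al)*Real.exp ((r-s)*d) < s^2*(s+al) := by
        rw [hrd2] at hend
        have h8' : (r^2*(r+al)*Real.exp ((r-s)*d)) * Real.exp (s*d)
            < (s^2*(s+al)) * Real.exp (s*d) := by linarith [hend]
        exact lt_of_mul_lt_mul_right h8' hEsp.le
      have h9 : r^2*(r+al)*Real.exp ((r-s)*y) < s^2*(s+al) := by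
        have hpos : 0 < r^2*(r+al) := by positivity
        exact lt_trans (mul_lt_mul_of_pos_left hlt hpos) h8
      rw [hry]
      have h10 := mul_lt_mul_of_pos_right h9 (Real.exp_pos (s*y))
      linarith [h10]
  have hWge : ∀ x, 0 ≤ x → x < d →
      K < r*(r+al)*Real.exp (r*x) - s*(s+al)*Real.exp (s*x) := by
    intro x h0 h1
    have h2 := hanti (Set.mem_Icc.mpr ⟨h0, h1.le⟩) (Set.mem_Icc.mpr ⟨hd0.le, le_rfl⟩) h1
    have h2' : r*(r+al)*Real.exp (r*d) - s*(s+al)*Real.exp (s*d)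
        < r*(r+al)*Real.exp (r*x) - s*(s+al)*Real.exp (s*x) := h2
    rw [hKdef]
    exact h2'
  refine ⟨hd0, fun x _ => hVdiff x, ?_, ?_⟩
  · rw [hderivV]
    exact hWcont.continuousOn
  · intro x hx
    simp only [hderivV]
    have hIrw : (∫ y in (0:ℝ)..x, V (x-y) * (al * Real.exp (-al*y)))
        = ∫ z in (0:ℝ)..x, V z * (al * Real.exp (-al*(x-z))) := by
      have h := intervalIntegral.integral_comp_sub_left (a := (0:ℝ)) (b := x)
        (fun z => V z * (al * Real.exp (-al*(x-z)))) x
      simp only [sub_self, sub_zero] at h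
      rw [← h]
      apply intervalIntegral.integral_congr
      intro y _
      simp only [sub_sub_cancel]
    rcases lt_or_ge x d with hxd|hxd
    · -- case 0 < x < d
      simp only [if_pos hxd]
      have hcongr : Set.EqOn (fun z => V z * (al * Real.exp (-al*(x-z))))
          (fun z => (al*(r+al)*(Real.exp (al*x))⁻¹/K) * Real.exp ((r+al)*z)
            + (-(al*(s+al)*(Real.exp (al*x))⁻¹/K)) * Real.exp ((s+al)*z)) (Set.uIcc 0 x) := by
        intro z hz
        rw [Set.uIcc_of_le hx.le] at hz
        simp only []
        rw [hVg1 z (hz.2.trans hxd.le),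
            show -al*(x-z) = al*z - al*x by ring, Real.exp_sub,
            show (r+al)*z = r*z + al*z by ring, Real.exp_add,
            show (s+al)*z = s*z + al*z by ring, Real.exp_add]
        field_simp
        ring
      have hIval : (∫ z in (0:ℝ)..x, V z * (al * Real.exp (-al*(x-z))))
          = (al*(r+al)*(Real.exp (al*x))⁻¹/K) * ((Real.exp ((r+al)*x) - Real.exp ((r+al)*0))/(r+al))
            + (-(al*(s+al)*(Real.exp (al*x))⁻¹/K)) * ((Real.exp ((s+al)*x) - Real.exp ((s+al)*0))/(s+al)) := by
        rw [intervalIntegral.integral_congr hcongr]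
        exact expInt2 _ _ _ _ _ _ (ne_of_gt hra) (ne_of_gt hsa)
      have hval0 : (c-0)*((r*(r+al)*Real.exp (r*x) - s*(s+al)*Real.exp (s*x))/K)
          - (lam+del)*V x
          + lam*(∫ y in (0:ℝ)..x, V (x-y) * (al * Real.exp (-al*y))) + 0 = 0 := by
        rw [hIrw, hIval, hVg1 x hxd.le, mul_zero, Real.exp_zero,
            show (r+al)*x = r*x + al*x by ring, Real.exp_add,
            show (s+al)*x = s*x + al*x by ring, Real.exp_add]
        field_simp
        simp only [zero_mul, Real.exp_zero]
        rw [mul_comm x s]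
        linear_combination (Real.exp (al*x)*Real.exp (r*x))*hr
          - (Real.exp (al*x)*Real.exp (s*x))*hs
      apply IsGreatest.csSup_eq
      constructor
      · exact ⟨0, Set.mem_Icc.mpr ⟨le_rfl, hu0.le⟩, hval0⟩
      · rintro v ⟨u, hu, rfl⟩
        simp only []
        rw [Set.mem_Icc] at hu
        have hW1 : 1 ≤ (r*(r+al)*Real.exp (r*x) - s*(s+al)*Real.exp (s*x))/K := by
          rw [le_div_iff₀ hK]
          have := hWge x hx.le hxd
          linarith
        have hdiff : (c-u)*((r*(r+al)*Real.exp (r*x) - s*(s+al)*Real.exp (s*x))/K)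
            - (lam+del)*V x
            + lam*(∫ y in (0:ℝ)..x, V (x-y) * (al * Real.exp (-al*y))) + u
            = ((c-0)*((r*(r+al)*Real.exp (r*x) - s*(s+al)*Real.exp (s*x))/K)
            - (lam+del)*V x
            + lam*(∫ y in (0:ℝ)..x, V (x-y) * (al * Real.exp (-al*y))) + 0)
            + u*(1 - (r*(r+al)*Real.exp (r*x) - s*(s+al)*Real.exp (s*x))/K) := by ring
        rw [hdiff, hval0, zero_add]
        exact mul_nonpos_of_nonneg_of_nonpos hu.1 (by linarith [hW1])
    · -- case d ≤ x
      simp only [if_neg (not_lt.mpr hxd)]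
      have hcont2 : Continuous fun z => V z * (al * Real.exp (-al*(x-z))) := by
        apply hVcont.mul
        apply continuous_const.mul
        apply Real.continuous_exp.comp
        exact continuous_const.mul (continuous_const.sub continuous_id)
      have hsplit : (∫ z in (0:ℝ)..x, V z * (al * Real.exp (-al*(x-z))))
          = (∫ z in (0:ℝ)..d, V z * (al * Real.exp (-al*(x-z))))
            + ∫ z in d..x, V z * (al * Real.exp (-al*(x-z))) :=
        (intervalIntegral.integral_add_adjacent_intervals
          (hcont2.intervalIntegrable 0 d) (hcont2.intervalIntegrable d x)).symm
      have hcongr1 : Set.EqOn (fun z => V z * (al * Real.exp (-al*(x-z))))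
          (fun z => (al*(r+al)*(Real.exp (al*x))⁻¹/K) * Real.exp ((r+al)*z)
            + (-(al*(s+al)*(Real.exp (al*x))⁻¹/K)) * Real.exp ((s+al)*z)) (Set.uIcc 0 d) := by
        intro z hz
        rw [Set.uIcc_of_le hd0.le] at hz
        simp only []
        rw [hVg1 z hz.2,
            show -al*(x-z) = al*z - al*x by ring, Real.exp_sub,
            show (r+al)*z = r*z + al*z by ring, Real.exp_add,
            show (s+al)*z = s*z + al*z by ring, Real.exp_add]
        field_simp
        ring
      have hI1 : (∫ z in (0:ℝ)..d, V z * (al * Real.exp (-al*(x-z))))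
          = (al*(r+al)*(Real.exp (al*x))⁻¹/K) * ((Real.exp ((r+al)*d) - Real.exp ((r+al)*0))/(r+al))
            + (-(al*(s+al)*(Real.exp (al*x))⁻¹/K)) * ((Real.exp ((s+al)*d) - Real.exp ((s+al)*0))/(s+al)) := by
        rw [intervalIntegral.integral_congr hcongr1]
        exact expInt2 _ _ _ _ _ _ (ne_of_gt hra) (ne_of_gt hsa)
      have hcongr2 : Set.EqOn (fun z => V z * (al * Real.exp (-al*(x-z))))
          (fun z => ((u0/del)*al*(Real.exp (al*x))⁻¹) * Real.exp (al*z)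
            + ((al/t)*(Real.exp (al*x))⁻¹*(Real.exp (t*d))⁻¹) * Real.exp ((t+al)*z))
          (Set.uIcc d x) := by
        intro z hz
        rw [Set.uIcc_of_le hxd] at hz
        simp only []
        rw [hVg2 z hz.1,
            show t*(z-d) = t*z - t*d by ring, Real.exp_sub,
            show -al*(x-z) = al*z - al*x by ring, Real.exp_sub,
            show (t+al)*z = t*z + al*z by ring, Real.exp_add]
        field_simp
      have hI2 : (∫ z in d..x, V z * (al * Real.exp (-al*(x-z))))
          = ((u0/del)*al*(Real.exp (al*x))⁻¹) * ((Real.exp (al*x) - Real.exp (al*d))/al)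
            + ((al/t)*(Real.exp (al*x))⁻¹*(Real.exp (t*d))⁻¹)
              * ((Real.exp ((t+al)*x) - Real.exp ((t+al)*d))/(t+al)) := by
        rw [intervalIntegral.integral_congr hcongr2]
        exact expInt2 _ _ _ _ _ _ (ne_of_gt hal) (ne_of_gt hta)
      have hvalu : (c-u0)*Real.exp (t*(x-d)) - (lam+del)*V x
          + lam*(∫ y in (0:ℝ)..x, V (x-y) * (al * Real.exp (-al*y))) + u0 = 0 := by
        rw [hIrw, hsplit, hI1, hI2, hVg2 x hxd, mul_zero, Real.exp_zero,
            show t*(x-d) = t*x - t*d by ring, Real.exp_sub,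
            show (r+al)*d = r*d + al*d by ring, Real.exp_add,
            show (s+al)*d = s*d + al*d by ring, Real.exp_add,
            show (t+al)*x = t*x + al*x by ring, Real.exp_add,
            show (t+al)*d = t*d + al*d by ring, Real.exp_add]
        field_simp
        simp only [mul_zero, Real.exp_zero]
        rw [mul_comm d r, mul_comm d s]
        linear_combination
          (del*Real.exp (t*x)*Real.exp (x*al)*K)*htr
          + (lam*Real.exp (t*d)*Real.exp (d*al)*(t+al))*hEq2
          - (lam*Real.exp (t*d)*Real.exp (d*al)*del*t)*hEq6
      apply IsGreatest.csSup_eq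
      constructor
      · exact ⟨u0, Set.mem_Icc.mpr ⟨hu0.le, le_rfl⟩, hvalu⟩
      · rintro v ⟨u, hu, rfl⟩
        simp only []
        rw [Set.mem_Icc] at hu
        have hWle : Real.exp (t*(x-d)) ≤ 1 := by
          rw [Real.exp_le_one_iff]
          linarith [mul_nonneg (neg_nonneg.mpr ht0.le) (sub_nonneg.mpr hxd)]
        have hdiff : (c-u)*Real.exp (t*(x-d)) - (lam+del)*V x
            + lam*(∫ y in (0:ℝ)..x, V (x-y) * (al * Real.exp (-al*y))) + u
            = ((c-u0)*Real.exp (t*(x-d)) - (lam+del)*V x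
            + lam*(∫ y in (0:ℝ)..x, V (x-y) * (al * Real.exp (-al*y))) + u0)
            + (u0-u)*(Real.exp (t*(x-d)) - 1) := by ring
        rw [hdiff, hvalu, zero_add]
        exact mul_nonpos_of_nonneg_of_nonpos (by linarith [hu.2]) (by linarith [hWle])
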